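/- MLSR formulas are invariant under SR-bisimulations: if Z is an SR-bisimulation and (M, s) Z (N, t), then for every MLSR formula φ, M, s ⊨ φ if and only if N, t ⊨ φ. -/
import Mathlib


/-- MLSR syntax: atoms, ⊤, ¬, ∨, ◇, and the removal modality ⟨-φ⟩ψ. -/
inductive Form : Type where
  | atom : ℕ → Form
  | top : Form
  | neg : Form → Form
  | or : Form → Form → Form
  | dia : Form → Form
  | rem : Form → Form → Form

/-- A relational model. -/
structure Model (W : Type) where
  R : W → W → Prop
  V : ℕ → W → Prop

/-- Truth relative to a current domain `D ⊆ W` (submodel semantics);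
`M - {t}` is represented by shrinking the domain to `D \ {t}`. -/
def Sat {W : Type} (M : Model W) : Form → Set W → W → Prop
  | .atom p, _, s => M.V p s
  | .top, _, _ => True
  | .neg φ, D, s => ¬ Sat M φ D s
  | .or φ ψ, D, s => Sat M φ D s ∨ Sat M ψ D s
  | .dia φ, D, s => ∃ t ∈ D, M.R s t ∧ Sat M φ D t
  | .rem φ ψ, D, s => ∃ t ∈ D, t ≠ s ∧ Sat M φ D t ∧ Sat M ψ (D \ {t}) s

/-- MLSR formulas are invariant under SR-bisimulations: a relation between
pointed submodels that agrees on atoms, satisfies the modal back-and-forth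
clauses inside each model, and has the removal back-and-forth clauses. -/
theorem stmt4 {W W' : Type} (M : Model W) (N : Model W')
    (Z : Set W → W → Set W' → W' → Prop)
    (hatom : ∀ D s E t, Z D s E t → ∀ p, (M.V p s ↔ N.V p t))
    (hzig : ∀ D s E t, Z D s E t → ∀ u ∈ D, M.R s u → ∃ v ∈ E, N.R t v ∧ Z D u E v)
    (hzag : ∀ D s E t, Z D s E t → ∀ v ∈ E, N.R t v → ∃ u ∈ D, M.R s u ∧ Z D u E v)
    (hforth : ∀ D s E t, Z D s E t → ∀ u ∈ D, u ≠ s →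
      ∃ v ∈ E, v ≠ t ∧ Z D u E v ∧ Z (D \ {u}) s (E \ {v}) t)
    (hback : ∀ D s E t, Z D s E t → ∀ v ∈ E, v ≠ t →
      ∃ u ∈ D, u ≠ s ∧ Z D u E v ∧ Z (D \ {u}) s (E \ {v}) t)
    (D : Set W) (E : Set W') (s : W) (t : W') (h : Z D s E t) (φ : Form) :
    Sat M φ D s ↔ Sat N φ E t := by
  induction φ generalizing D E s t with
  | atom p => exact hatom _ _ _ _ h p
  | top => simp [Sat]
  | neg φ ih => exact not_congr (ih _ _ _ _ h)
  | or φ ψ ih1 ih2 => exact or_congr (ih1 _ _ _ _ h) (ih2 _ _ _ _ h)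
  | dia φ ih =>
    constructor
    · rintro ⟨u, hu, hr, hs⟩
      obtain ⟨v, hv, hrv, hz⟩ := hzig _ _ _ _ h u hu hr
      exact ⟨v, hv, hrv, (ih _ _ _ _ hz).mp hs⟩
    · rintro ⟨v, hv, hr, hs⟩
      obtain ⟨u, hu, hru, hz⟩ := hzag _ _ _ _ h v hv hr
      exact ⟨u, hu, hru, (ih _ _ _ _ hz).mpr hs⟩
  | rem φ ψ ih1 ih2 =>
    constructor
    · rintro ⟨u, hu, hus, h1, h2⟩
      obtain ⟨v, hv, hvt, hz1, hz2⟩ := hforth _ _ _ _ h u hu hus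
      exact ⟨v, hv, hvt, (ih1 _ _ _ _ hz1).mp h1, (ih2 _ _ _ _ hz2).mp h2⟩
    · rintro ⟨v, hv, hvt, h1, h2⟩
      obtain ⟨u, hu, hus, hz1, hz2⟩ := hback _ _ _ _ h v hv hvt
      exact ⟨u, hu, hus, (ih1 _ _ _ _ hz1).mpr h1, (ih2 _ _ _ _ hz2).mpr h2⟩
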